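/- For every integer i ≥ 1 and all integers n_1, ..., n_{i+1} ≥ 2, the quantities s_i satisfy the recursion s_{i+1}(n_1, ..., n_{i+1}) = s_i(n_1, ..., n_i) · s_1(n_{i+1}) - Σ_{r=1}^{i} s_i(n_1, ..., n_{r-1}, n_r + n_{i+1}, n_{r+1}, ..., n_i), where s_1(m) = ζ(m). -/

import Mathlib

open Function

set_option maxHeartbeats 1600000

/-- `s_i(n_1, …, n_i) = Σ_{k_1, …, k_i ≥ 1 pairwise distinct} 1/(k_1^{n_1} ⋯ k_i^{n_i})`. -/
noncomputable def distinctZetaSum (i : ℕ) (c : Fin i → ℕ) : ℝ :=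
  ∑' k : {k : Fin i → ℕ // Function.Injective k ∧ ∀ t, 0 < k t},
    ∏ t, 1 / ((k.1 t : ℝ)) ^ (c t)

private lemma summable_aux (i : ℕ) : ∀ (c : Fin i → ℕ), (∀ t, 2 ≤ c t) →
    Summable (fun k : Fin i → ℕ => ∏ t, 1 / ((k t : ℝ)) ^ (c t)) := by
  induction i with
  | zero =>
    intro c _
    exact Summable.of_finite
  | succ i ih =>
    intro c hc
    have p1 : 0 ≤ (fun a : ℕ => 1 / (a : ℝ) ^ (c 0)) := fun a => by positivity
    have p2 : 0 ≤ (fun k : Fin i → ℕ => ∏ t, 1 / ((k t : ℝ)) ^ (c t.succ)) :=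
      fun k => Finset.prod_nonneg fun _ _ => by positivity
    have hs := (Real.summable_one_div_nat_pow.mpr
        (show 1 < c 0 by have := hc 0; omega)).mul_of_nonneg
      (ih (fun t => c t.succ) (fun t => hc t.succ)) p1 p2
    refine (Fin.consEquiv (fun _ : Fin (i+1) => ℕ)).summable_iff.mp (hs.congr ?_)
    rintro ⟨a, k⟩
    show (1 / (a : ℝ) ^ (c 0)) * ∏ t : Fin i, 1 / ((k t : ℝ)) ^ (c t.succ)
      = ∏ t, 1 / (((Fin.cons a k : Fin (i+1) → ℕ) t : ℝ)) ^ (c t)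
    rw [Fin.prod_univ_succ]
    simp

private lemma update_prod_eq {i : ℕ} (c : Fin i → ℕ) (r : Fin i) (m : ℕ) (k : Fin i → ℕ) :
    (∏ t, 1 / ((k t : ℝ)) ^ (Function.update c r (c r + m) t))
      = (∏ t, 1 / ((k t : ℝ)) ^ (c t)) * (1 / ((k r : ℝ)) ^ m) := by
  have key : ∀ t, (1:ℝ) / ((k t : ℝ)) ^ (Function.update c r (c r + m) t)
      = (1 / ((k t : ℝ)) ^ (c t)) * (if t = r then 1 / ((k t : ℝ)) ^ m else 1) := by
    intro t
    rcases eq_or_ne t r with rfl | h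
    · simp [Function.update_self, pow_add, one_div, mul_inv]
      ring
    · simp [Function.update_of_ne h, h]
  rw [Finset.prod_congr rfl (fun t _ => key t), Finset.prod_mul_distrib]
  congr 1
  simp

theorem stmt_17 (i : ℕ) (hi : 1 ≤ i) (n : Fin (i + 1) → ℕ) (hn : ∀ t, 2 ≤ n t) :
    distinctZetaSum (i + 1) n
      = distinctZetaSum i (fun t => n t.castSucc)
          * distinctZetaSum 1 (fun _ => n (Fin.last i))
        - ∑ r : Fin i,
            distinctZetaSum i
              (Function.update (fun t => n t.castSucc) r (n r.castSucc + n (Fin.last i))) := by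
  classical
  set m : ℕ := n (Fin.last i) with hm
  set c : Fin i → ℕ := fun t => n t.castSucc with hcdef
  have hc2 : ∀ t, 2 ≤ c t := fun t => hn _
  have hm2 : 2 ≤ m := hn _
  -- the index types
  let T : ℕ → Type := fun j => {k : Fin j → ℕ // Function.Injective k ∧ ∀ t, 0 < k t}
  -- summability
  have hSi : Summable (fun k : T i => ∏ t, 1 / ((k.1 t : ℝ)) ^ (c t)) :=
    (summable_aux i c hc2).subtype {k | Function.Injective k ∧ ∀ t, 0 < k t}
  have hS1 : Summable (fun k : T 1 => ∏ t : Fin 1, 1 / ((k.1 t : ℝ)) ^ m) :=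
    (summable_aux 1 (fun _ => m) (fun _ => hm2)).subtype
      {k | Function.Injective k ∧ ∀ t, 0 < k t}
  set f : T i × T 1 → ℝ := fun z =>
    (∏ t, 1 / ((z.1.1 t : ℝ)) ^ (c t)) * ∏ t : Fin 1, 1 / ((z.2.1 t : ℝ)) ^ m with hfdef
  have hf : Summable f :=
    hSi.mul_of_nonneg hS1 (fun _ => Finset.prod_nonneg fun _ _ => by positivity)
      (fun _ => Finset.prod_nonneg fun _ _ => by positivity)
  have h1 : distinctZetaSum i c * distinctZetaSum 1 (fun _ => m) = ∑' z : T i × T 1, f z :=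
    hSi.tsum_mul_tsum hS1 hf
  -- the splitting set
  set S : Set (T i × T 1) := {z | ∀ r, z.1.1 r ≠ z.2.1 0} with hSdef
  have hsplit : (∑' z : S, f z) + ∑' z : ↥Sᶜ, f z = ∑' z, f z :=
    Summable.tsum_add_tsum_compl (hf.subtype S) (hf.subtype Sᶜ)
  -- first equiv : T (i+1) ≃ S
  have hφaux : ∀ k : T (i + 1),
      ((⟨fun t => k.1 t.castSucc, k.2.1.comp (Fin.castSucc_injective i),
          fun t => k.2.2 _⟩ : T i),
        (⟨fun _ => k.1 (Fin.last i), injective_of_subsingleton _,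
          fun _ => k.2.2 _⟩ : T 1)) ∈ S := by
    intro k r hr
    exact absurd (k.2.1 hr) (Fin.castSucc_lt_last r).ne
  let φ : T (i + 1) → S := fun k => ⟨_, hφaux k⟩
  have hφbij : Function.Bijective φ := by
    constructor
    · intro k1 k2 h
      have hc1 : ∀ t : Fin i, k1.1 t.castSucc = k2.1 t.castSucc := fun t =>
        congrFun (congrArg (fun z : S => z.1.1.1) h) t
      have hl : k1.1 (Fin.last i) = k2.1 (Fin.last i) :=
        congrFun (congrArg (fun z : S => z.1.2.1) h) 0
      apply Subtype.ext
      funext t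
      induction t using Fin.lastCases with
      | last => exact hl
      | cast t => exact hc1 t
    · rintro ⟨⟨⟨k, hk⟩, ⟨x, hx⟩⟩, hmem⟩
      have hmem' : ∀ r, k r ≠ x 0 := hmem
      have hKinj : Function.Injective (Fin.snoc k (x 0) : Fin (i+1) → ℕ) := by
        intro s t hst
        induction s using Fin.lastCases with
        | last =>
          induction t using Fin.lastCases with
          | last => rfl
          | cast t =>
            rw [Fin.snoc_last, Fin.snoc_castSucc] at hst
            exact absurd hst.symm (hmem' t)
        | cast s =>
          induction t using Fin.lastCases with
          | last =>
            rw [Fin.snoc_last, Fin.snoc_castSucc] at hst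
            exact absurd hst (hmem' s)
          | cast t =>
            rw [Fin.snoc_castSucc, Fin.snoc_castSucc] at hst
            exact congrArg _ (hk.1 hst)
      have hKpos : ∀ t, 0 < (Fin.snoc k (x 0) : Fin (i+1) → ℕ) t := by
        intro t
        induction t using Fin.lastCases with
        | last => rw [Fin.snoc_last]; exact hx.2 0
        | cast t => rw [Fin.snoc_castSucc]; exact hk.2 t
      refine ⟨⟨Fin.snoc k (x 0), hKinj, hKpos⟩, ?_⟩
      apply Subtype.ext
      apply Prod.ext
      · apply Subtype.ext
        funext t
        simp [φ]
      · apply Subtype.ext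
        funext t
        have ht : t = 0 := Subsingleton.elim t 0
        rw [ht]
        simp [φ]
  let e1 : T (i + 1) ≃ S := Equiv.ofBijective φ hφbij
  have h2 : ∑' z : S, f z = distinctZetaSum (i + 1) n := by
    rw [← e1.tsum_eq (fun z : S => f ↑z)]
    apply tsum_congr
    intro k
    show f (φ k) = _
    rw [hfdef]
    simp only
    rw [Fin.prod_univ_castSucc (f := fun t => 1 / ((k.1 t : ℝ)) ^ (n t)),
      Fin.prod_univ_one]
  -- second equiv : Fin i × T i ≃ Sᶜ
  have hψaux : ∀ p : Fin i × T i,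
      ((p.2, (⟨fun _ => p.2.1 p.1, injective_of_subsingleton _,
          fun _ => p.2.2.2 _⟩ : T 1)) : T i × T 1) ∈ Sᶜ := by
    rintro ⟨r, k⟩ h
    exact h r rfl
  let ψ : Fin i × T i → ↥Sᶜ := fun p => ⟨_, hψaux p⟩
  have hψbij : Function.Bijective ψ := by
    constructor
    · rintro ⟨r1, k1⟩ ⟨r2, k2⟩ h
      have hk : k1 = k2 := congrArg (fun z : ↥Sᶜ => z.1.1) h
      have hr : k1.1 r1 = k2.1 r2 := congrFun (congrArg (fun z : ↥Sᶜ => z.1.2.1) h) 0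
      subst hk
      exact Prod.ext (k1.2.1 hr) rfl
    · rintro ⟨⟨⟨k, hk⟩, ⟨x, hx⟩⟩, hmem⟩
      have : ¬∀ r, k r ≠ x 0 := hmem
      push_neg at this
      obtain ⟨r, hr⟩ := this
      refine ⟨(r, ⟨k, hk⟩), ?_⟩
      apply Subtype.ext
      apply Prod.ext
      · rfl
      · apply Subtype.ext
        funext t
        have ht : t = 0 := Subsingleton.elim t 0
        rw [ht]
        exact hr
  let e2 : Fin i × T i ≃ ↥Sᶜ := Equiv.ofBijective ψ hψbij
  have hsum2 : Summable (fun p : Fin i × T i => f (ψ p)) :=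
    e2.summable_iff.mpr (hf.subtype Sᶜ)
  have h3 : ∑' z : ↥Sᶜ, f z
      = ∑ r : Fin i, distinctZetaSum i (Function.update c r (c r + m)) := by
    rw [← e2.tsum_eq (fun z : ↥Sᶜ => f ↑z)]
    simp only [e2, Equiv.ofBijective_apply]
    have hfib : ∀ r : Fin i, Summable (fun k : T i => f (ψ (r, k))) := by
      intro r
      exact hsum2.comp_injective (fun a b h => (Prod.mk.injEq r a r b ▸ h).2)
    rw [Summable.tsum_prod' hsum2 hfib, tsum_fintype]
    apply Finset.sum_congr rfl
    intro r _
    unfold distinctZetaSum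
    apply tsum_congr
    intro k
    show (∏ t, 1 / ((k.1 t : ℝ)) ^ (c t)) * ∏ t : Fin 1, 1 / ((k.1 r : ℝ)) ^ m = _
    rw [Fin.prod_univ_one, update_prod_eq c r m k.1]
  linarith [h1, hsplit, h2, h3]
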